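/- Let α, β > 0 and let u be a twice continuously differentiable nonnegative solution on (0,∞) of u'' = (αβ/2) u + u(u²−1)/r² with lim_{r→0} u(r) = 1 and lim_{r→∞} u(r) = 0, not identically 0 or 1. Then for every r > 0, exp(−√(αβ/2)·r) < u(r) < 1. -/
import Mathlib

open MeasureTheory Filter Set Topology

noncomputable section

/-- No local min at a point where the second derivative is negative. -/
private lemma no_local_min (f f' : ℝ → ℝ) {r s : ℝ} (hr : 0 < r)
    (hder : ∀ x : ℝ, 0 < x → HasDerivAt f (f' x) x)
    (hs : HasDerivAt f' s r) (hsneg : s < 0)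
    (hmin : IsLocalMin f r) : False := by
  have hf'0 : f' r = 0 := hmin.hasDerivAt_eq_zero (hder r hr)
  have hslope : Tendsto (slope f' r) (𝓝[>] r) (𝓝 s) :=
    (hasDerivAt_iff_tendsto_slope.1 hs).mono_left
      (nhdsWithin_mono _ fun x hx => ne_of_gt hx)
  have hev1 : ∀ᶠ x in 𝓝[>] r, slope f' r x < 0 :=
    hslope.eventually (eventually_lt_nhds hsneg)
  have hev2 : ∀ᶠ x in 𝓝[>] r, f r ≤ f x := hmin.filter_mono nhdsWithin_le_nhds
  obtain ⟨U, hU, hsub⟩ := mem_nhdsGT_iff_exists_Ioo_subset.1 (hev1.and hev2)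
  have hrU : r < U := hU
  set b := (r + U) / 2 with hbdef
  have hrb : r < b := by simp only [hbdef]; linarith
  have hbU : b < U := by simp only [hbdef]; linarith
  have hcont : ContinuousOn f (Icc r b) := fun x hx =>
    ((hder x (lt_of_lt_of_le hr hx.1)).continuousAt).continuousWithinAt
  have hderI : ∀ x ∈ Ioo r b, HasDerivAt f (f' x) x := fun x hx => hder x (hr.trans hx.1)
  obtain ⟨c, hc, hceq⟩ := exists_hasDerivAt_eq_slope f f' hrb hcont hderI
  have hcU : c ∈ Ioo r U := ⟨hc.1, hc.2.trans hbU⟩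
  have h1 := (hsub hcU).1
  rw [slope_def_field, hf'0, sub_zero] at h1
  have hfc : f' c < 0 := by
    have hpos : 0 < c - r := sub_pos.2 hc.1
    have := (div_lt_iff₀ hpos).1 h1
    simpa using this
  rw [hceq] at hfc
  have hfb : f b < f r := by
    have hpos : 0 < b - r := sub_pos.2 hrb
    have := (div_lt_iff₀ hpos).1 hfc
    simpa using by linarith [this]
  have hb2 := (hsub ⟨hrb, hbU⟩).2
  linarith

/-- A continuous function on (0,∞) with limits at both ends, dipping strictly below
both limits, attains an interior local min. -/
private lemma exists_interior_min (f : ℝ → ℝ)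
    (hc : ∀ x : ℝ, 0 < x → ContinuousAt f x)
    {L0 Li r₁ : ℝ}
    (h0 : Tendsto f (𝓝[>] (0 : ℝ)) (𝓝 L0)) (hi : Tendsto f atTop (𝓝 Li))
    (hr₁ : 0 < r₁) (h1 : f r₁ < L0) (h2 : f r₁ < Li) :
    ∃ r : ℝ, 0 < r ∧ IsLocalMin f r ∧ f r ≤ f r₁ := by
  have e1 : ∀ᶠ x in 𝓝[>] (0 : ℝ), f r₁ < f x := h0.eventually (eventually_gt_nhds h1)
  have e2 : Ioo (0:ℝ) r₁ ∈ 𝓝[>] (0:ℝ) :=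
    Ioo_mem_nhdsGT_of_mem ⟨le_refl 0, hr₁⟩
  obtain ⟨a, hfa, ha0, har⟩ := (e1.and (eventually_of_mem e2 fun x hx => hx)).exists
  have e3 : ∀ᶠ x in atTop, f r₁ < f x := hi.eventually (eventually_gt_nhds h2)
  obtain ⟨b, hfb, hrb⟩ := (e3.and (eventually_gt_atTop r₁)).exists
  have hab : a < b := har.trans hrb
  have hcont : ContinuousOn f (Icc a b) := fun x hx =>
    (hc x (lt_of_lt_of_le ha0 hx.1)).continuousWithinAt
  obtain ⟨r, hrmem, hrmin⟩ := isCompact_Icc.exists_isMinOn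
    ⟨a, left_mem_Icc.2 hab.le⟩ hcont
  have hmin' : ∀ x ∈ Icc a b, f r ≤ f x := fun x hx => hrmin hx
  have hle : f r ≤ f r₁ := hmin' r₁ ⟨har.le, hrb.le⟩
  have hra : a < r := by
    rcases eq_or_lt_of_le hrmem.1 with h | h
    · exfalso; rw [h] at hfa; linarith
    · exact h
  have hrbb : r < b := by
    rcases eq_or_lt_of_le hrmem.2 with h | h
    · exfalso; rw [← h] at hfb; linarith
    · exact h
  refine ⟨r, ha0.trans hra, ?_, hle⟩
  exact Filter.eventually_of_mem (Ioo_mem_nhds hra hrbb)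
    fun x hx => hmin' x (Ioo_subset_Icc_self hx)

/-- any nonnegative twice continuously differentiable solution of
`u'' = (αβ/2)u + u(u²−1)/r²` with `u(0⁺)=1`, `u(∞)=0`, not identically `0` or `1`,
satisfies the global pointwise bounds `exp(−√(αβ/2) r) < u(r) < 1`. -/
theorem gamma_infty_pointwise_bounds (α β : ℝ) (hα : 0 < α) (hβ : 0 < β)
    (u u' : ℝ → ℝ)
    (hode : ∀ r : ℝ, 0 < r →
      HasDerivAt u (u' r) r ∧
      HasDerivAt u' (α * β / 2 * u r + u r * (u r ^ 2 - 1) / r ^ 2) r)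
    (hnonneg : ∀ r : ℝ, 0 < r → 0 ≤ u r)
    (hu0 : Tendsto u (𝓝[>] (0 : ℝ)) (𝓝 1))
    (huinf : Tendsto u atTop (𝓝 0))
    (hne0 : ¬ ∀ r : ℝ, 0 < r → u r = 0)
    (hne1 : ¬ ∀ r : ℝ, 0 < r → u r = 1) :
    ∀ r : ℝ, 0 < r →
      Real.exp (-(Real.sqrt (α * β / 2)) * r) < u r ∧ u r < 1 := by
  have hab2 : (0:ℝ) < α * β / 2 := by positivity
  set k : ℝ := Real.sqrt (α * β / 2) with hkdef
  have hk : 0 < k := Real.sqrt_pos.2 hab2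
  have hk2 : k ^ 2 = α * β / 2 := Real.sq_sqrt hab2.le
  have hucont : ∀ x : ℝ, 0 < x → ContinuousAt u x := fun x hx =>
    (hode x hx).1.continuousAt
  -- Upper bound
  have upper : ∀ r : ℝ, 0 < r → u r < 1 := by
    by_contra hcon
    push_neg at hcon
    obtain ⟨r₀, hr₀, hur₀⟩ := hcon
    by_cases hstrict : ∃ r₁ : ℝ, 0 < r₁ ∧ 1 < u r₁
    · obtain ⟨r₁, hr₁, hur₁⟩ := hstrict
      have hg0 : Tendsto (fun x => -u x) (𝓝[>] (0:ℝ)) (𝓝 (-1)) := hu0.neg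
      have hgi : Tendsto (fun x => -u x) atTop (𝓝 0) := by simpa using huinf.neg
      obtain ⟨r, hr, hmin, hle⟩ := exists_interior_min (fun x => -u x)
        (fun x hx => (hucont x hx).neg) hg0 hgi hr₁
        (by show -u r₁ < -1; linarith) (by show -u r₁ < 0; linarith)
      have hur : 1 < u r := by
        have h : -u r ≤ -u r₁ := hle
        linarith
      refine no_local_min (fun x => -u x) (fun x => -u' x) hr
        (fun x hx => (hode x hx).1.neg) ((hode r hr).2.neg) ?_ hmin
      have h1 : 0 < u r := by linarith
      have h2 : 0 < u r ^ 2 - 1 := by nlinarith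
      have h3 : 0 < u r * (u r ^ 2 - 1) / r ^ 2 := by positivity
      have h4 : 0 < α * β / 2 * u r := by positivity
      linarith
    · push_neg at hstrict
      have hur1 : u r₀ = 1 := le_antisymm (hstrict r₀ hr₀) hur₀
      have hmin : IsLocalMin (fun x => -u x) r₀ := by
        filter_upwards [Ioi_mem_nhds hr₀] with x hx
        have := hstrict x hx
        simp only [hur1]
        linarith
      refine no_local_min (fun x => -u x) (fun x => -u' x) hr₀
        (fun x hx => (hode x hx).1.neg) ((hode r₀ hr₀).2.neg) ?_ hmin
      rw [hur1]
      have hz : (1:ℝ) * ((1:ℝ) ^ 2 - 1) / r₀ ^ 2 = 0 := by ring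
      rw [hz, add_zero]
      linarith
  -- Lower bound
  have hEder : ∀ x : ℝ, HasDerivAt (fun y => Real.exp (-k * y)) (Real.exp (-k * x) * -k) x := by
    intro x
    have h1 : HasDerivAt (fun y : ℝ => -k * y) (-k) x := by
      simpa using (hasDerivAt_id x).const_mul (-k)
    exact h1.exp
  set w : ℝ → ℝ := fun x => u x - Real.exp (-k * x) with hwdef
  set w' : ℝ → ℝ := fun x => u' x - Real.exp (-k * x) * -k with hw'def
  have hwder : ∀ x : ℝ, 0 < x → HasDerivAt w (w' x) x := fun x hx =>
    (hode x hx).1.sub (hEder x)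
  have hw2der : ∀ x : ℝ, 0 < x → HasDerivAt w'
      (α * β / 2 * u x + u x * (u x ^ 2 - 1) / x ^ 2 - Real.exp (-k * x) * -k * -k) x :=
    fun x hx => (hode x hx).2.sub ((hEder x).mul_const (-k))
  have hwcont : ∀ x : ℝ, 0 < x → ContinuousAt w x := fun x hx =>
    (hwder x hx).continuousAt
  have hEcont : Continuous fun x : ℝ => Real.exp (-k * x) :=
    Real.continuous_exp.comp (continuous_const.mul continuous_id)
  have hw0 : Tendsto w (𝓝[>] (0:ℝ)) (𝓝 0) := by
    have hE0 : Tendsto (fun x : ℝ => Real.exp (-k * x)) (𝓝[>] (0:ℝ)) (𝓝 1) := by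
      have := (hEcont.tendsto 0).mono_left (nhdsWithin_le_nhds (s := Ioi (0:ℝ)))
      simpa using this
    simpa only [sub_self] using hu0.sub hE0
  have hwi : Tendsto w atTop (𝓝 0) := by
    have hE1 : Tendsto (fun x : ℝ => Real.exp (-(k * x))) atTop (𝓝 0) :=
      Real.tendsto_exp_neg_atTop_nhds_zero.comp (tendsto_id.const_mul_atTop hk)
    have hE2 : Tendsto (fun x : ℝ => Real.exp (-k * x)) atTop (𝓝 0) := by
      simpa [neg_mul] using hE1
    simpa only [sub_self] using huinf.sub hE2
  have hEmul : ∀ x : ℝ, Real.exp (-k * x) * -k * -k = α * β / 2 * Real.exp (-k * x) := by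
    intro x; rw [← hk2]; ring
  have lower : ∀ r : ℝ, 0 < r → 0 < w r := by
    by_contra hcon
    push_neg at hcon
    obtain ⟨r₀, hr₀, hwr₀⟩ := hcon
    by_cases hstrict : ∃ r₁ : ℝ, 0 < r₁ ∧ w r₁ < 0
    · obtain ⟨r₁, hr₁, hwr₁⟩ := hstrict
      obtain ⟨r, hr, hmin, hle⟩ := exists_interior_min w hwcont hw0 hwi hr₁ hwr₁ hwr₁
      have hwr : w r < 0 := lt_of_le_of_lt hle hwr₁
      refine no_local_min w w' hr hwder (hw2der r hr) ?_ hmin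
      rw [hEmul r]
      have hwr' : u r - Real.exp (-k * r) < 0 := hwr
      have hE1 : Real.exp (-k * r) < 1 := by
        rw [Real.exp_lt_one_iff]
        nlinarith
      have hu0' : 0 ≤ u r := hnonneg r hr
      have hu1 : u r < 1 := by linarith
      have t1 : u r * (u r ^ 2 - 1) ≤ 0 :=
        mul_nonpos_of_nonneg_of_nonpos hu0' (by nlinarith)
      have t2 : u r * (u r ^ 2 - 1) / r ^ 2 ≤ 0 :=
        div_nonpos_of_nonpos_of_nonneg t1 (sq_nonneg r)
      have t3 : α * β / 2 * u r < α * β / 2 * Real.exp (-k * r) :=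
        mul_lt_mul_of_pos_left (by linarith) hab2
      linarith
    · push_neg at hstrict
      have hwr0 : w r₀ = 0 := le_antisymm hwr₀ (hstrict r₀ hr₀)
      have hmin : IsLocalMin w r₀ := by
        filter_upwards [Ioi_mem_nhds hr₀] with x hx
        rw [hwr0]
        exact hstrict x hx
      refine no_local_min w w' hr₀ hwder (hw2der r₀ hr₀) ?_ hmin
      rw [hEmul r₀]
      have hue : u r₀ = Real.exp (-k * r₀) := by
        have : u r₀ - Real.exp (-k * r₀) = 0 := hwr0
        linarith
      have hE1 : Real.exp (-k * r₀) < 1 := by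
        rw [Real.exp_lt_one_iff]
        nlinarith
      have hupos : 0 < u r₀ := hue ▸ Real.exp_pos _
      have hu1 : u r₀ < 1 := hue ▸ hE1
      have t1 : u r₀ * (u r₀ ^ 2 - 1) < 0 :=
        mul_neg_of_pos_of_neg hupos (by nlinarith)
      have t2 : u r₀ * (u r₀ ^ 2 - 1) / r₀ ^ 2 < 0 :=
        div_neg_of_neg_of_pos t1 (by positivity)
      have t3 : α * β / 2 * u r₀ = α * β / 2 * Real.exp (-k * r₀) := by rw [hue]
      linarith
  intro r hr
  refine ⟨?_, upper r hr⟩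
  have := lower r hr
  have h2 : u r - Real.exp (-k * r) > 0 := this
  linarith
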